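/- The assignment Γ ↦ ℓ(Γ), where ℓ(Γ) is the one-vertex graph with dart set the underlying set of Γ and dart-reversing involution a ↦ a⁻¹, extends to a functor ℓ : Grp → Graph which is a right adjoint; its left adjoint F_ℓ : Graph → Grp sends a graph G to the group presented by generators D(G) and relations d · λ(d) = 1 for all darts d. -/

import Mathlib

open CategoryTheory

structure Graph' where
  V : Type
  D : Type
  s : D → V
  t : D → V
  inv : D → D
  inv_inv : ∀ d, inv (inv d) = d
  s_inv : ∀ d, s (inv d) = t d

@[ext]
structure GraphHom (G H : Graph') where
  fV : G.V → H.V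
  fD : G.D → H.D
  map_s : ∀ d, H.s (fD d) = fV (G.s d)
  map_t : ∀ d, H.t (fD d) = fV (G.t d)
  map_inv : ∀ d, H.inv (fD d) = fD (G.inv d)

instance : Category Graph' where
  Hom := GraphHom
  id G := ⟨id, id, fun _ => rfl, fun _ => rfl, fun _ => rfl⟩
  comp f g := ⟨g.fV ∘ f.fV, g.fD ∘ f.fD,
    fun d => by simp [g.map_s, f.map_s],
    fun d => by simp [g.map_t, f.map_t],
    fun d => by simp [g.map_inv, f.map_inv]⟩


/-- The one-vertex graph `ℓ(Γ)` with darts the elements of `Γ` and `λ(a) = a⁻¹`. -/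
def ellGraph (Γ : Type) [Group Γ] : Graph' where
  V := PUnit
  D := Γ
  s := fun _ => PUnit.unit
  t := fun _ => PUnit.unit
  inv := fun a => a⁻¹
  inv_inv := fun a => inv_inv a
  s_inv := fun _ => rfl

/-- The functor `ℓ : Grp → Graph'`. -/
def ellFunctor : GrpCat.{0} ⥤ Graph' where
  obj Γ := ellGraph Γ
  map {Γ Γ'} h :=
    ⟨fun _ => PUnit.unit, fun a => h a, fun _ => rfl, fun _ => rfl,
      fun a => by
        exact (map_inv (show ↑Γ →* ↑Γ' from h.hom) (show ↑Γ from a)).symm⟩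

/-- Relations for the presented group. -/
def grels (G : Graph') : Set (FreeGroup G.D) :=
  {r : FreeGroup G.D | ∃ d, r = FreeGroup.of d * FreeGroup.of (G.inv d)}

lemma grel_mul (G : Graph') (d : G.D) :
    (PresentedGroup.of d : PresentedGroup (grels G)) * PresentedGroup.of (G.inv d) = 1 := by
  have h : (FreeGroup.of d * FreeGroup.of (G.inv d)) ∈ Subgroup.normalClosure (grels G) :=
    Subgroup.subset_normalClosure ⟨d, rfl⟩
  exact (QuotientGroup.eq_one_iff _).2 h

def mapHom {G H : Graph'} (f : G ⟶ H) :
    PresentedGroup (grels G) →* PresentedGroup (grels H) :=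
  PresentedGroup.toGroup (f := fun d => PresentedGroup.of (f.fD d)) (by
    rintro r ⟨d, rfl⟩
    simp only [map_mul, FreeGroup.lift_apply_of]
    rw [← f.map_inv d]
    exact grel_mul H (f.fD d))

def Fell : Graph' ⥤ GrpCat.{0} where
  obj G := GrpCat.of (PresentedGroup (grels G))
  map f := GrpCat.ofHom (mapHom f)
  map_id G := by
    apply GrpCat.hom_ext
    apply PresentedGroup.ext
    intro x
    simp [mapHom]
    rfl
  map_comp {G H K} f g := by
    apply GrpCat.hom_ext
    apply PresentedGroup.ext
    intro x
    simp [mapHom]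
    rfl

instance (Γ : Type) [Group Γ] : Group (ellGraph Γ).D := inferInstanceAs (Group Γ)

def toGraphHom {G : Graph'} {Γ : Type} [Group Γ]
    (φ : PresentedGroup (grels G) →* Γ) : GraphHom G (ellGraph Γ) where
  fV := fun _ => PUnit.unit
  fD := fun d => φ (PresentedGroup.of d)
  map_s := fun _ => rfl
  map_t := fun _ => rfl
  map_inv := fun d => by
    show (φ (PresentedGroup.of d))⁻¹ = φ (PresentedGroup.of (G.inv d))
    refine (eq_inv_of_mul_eq_one_right ?_).symm
    rw [← map_mul, grel_mul G d, map_one]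

def toGrpHom {G : Graph'} {Γ : Type} [Group Γ]
    (ψ : GraphHom G (ellGraph Γ)) : PresentedGroup (grels G) →* Γ :=
  PresentedGroup.toGroup (f := fun d => (ψ.fD d : Γ)) (by
    rintro r ⟨d, rfl⟩
    simp only [map_mul, FreeGroup.lift_apply_of]
    have h : (ψ.fD d)⁻¹ = ψ.fD (G.inv d) := ψ.map_inv d
    rw [← h]
    exact mul_inv_cancel (ψ.fD d))

lemma toGrpHom_of {G : Graph'} {Γ : Type} [Group Γ]
    (ψ : GraphHom G (ellGraph Γ)) (d : G.D) :
    toGrpHom ψ (PresentedGroup.of d) = ψ.fD d :=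
  PresentedGroup.toGroup.of _

lemma mapHom_of {G H : Graph'} (f : G ⟶ H) (d : G.D) :
    mapHom f (PresentedGroup.of d) = PresentedGroup.of (f.fD d) :=
  PresentedGroup.toGroup.of _

def ellAdj : Fell ⊣ ellFunctor :=
  Adjunction.mkOfHomEquiv
    { homEquiv := fun G Γ =>
        { toFun := fun φ => toGraphHom (show PresentedGroup (grels G) →* Γ from φ.hom)
          invFun := fun ψ =>
            GrpCat.ofHom (show PresentedGroup (grels G) →* Γ from
              toGrpHom (show GraphHom G (ellGraph Γ) from ψ))
          left_inv := fun φ => by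
            apply GrpCat.hom_ext
            apply PresentedGroup.ext (rels := grels G)
            intro x
            show toGrpHom (toGraphHom (show PresentedGroup (grels G) →* Γ from φ.hom))
              (PresentedGroup.of x) = _
            rw [toGrpHom_of]
            rfl
          right_inv := fun ψ => by
            refine GraphHom.ext (funext fun v => Subsingleton.elim (α := PUnit) _ _)
              (funext fun d => ?_)
            show (toGraphHom (toGrpHom (show GraphHom G (ellGraph Γ) from ψ))).fD d
              = ψ.fD d
            show toGrpHom (show GraphHom G (ellGraph Γ) from ψ) (PresentedGroup.of d)
              = ψ.fD d
            rw [toGrpHom_of] }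
      homEquiv_naturality_left_symm := fun {G' G Γ} f g => by
        apply GrpCat.hom_ext
        apply PresentedGroup.ext (rels := grels G')
        intro x
        show toGrpHom (show GraphHom G' (ellGraph Γ) from f ≫ g) (PresentedGroup.of x)
          = toGrpHom (show GraphHom G (ellGraph Γ) from g) (mapHom f (PresentedGroup.of x))
        rw [toGrpHom_of, mapHom_of, toGrpHom_of]
        rfl
      homEquiv_naturality_right := fun {G Γ Γ'} f g => by
        refine GraphHom.ext (funext fun v => Subsingleton.elim (α := PUnit) _ _)
          (funext fun d => ?_)
        rfl }

/-- `ℓ` is a right adjoint, with left adjoint sending a graph `G` to the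
group presented by generators `D(G)` and relations `d · λ(d) = 1`. -/
theorem ellFunctor_isRightAdjoint :
    ∃ F : Graph' ⥤ GrpCat.{0}, Nonempty (F ⊣ ellFunctor) ∧
      ∀ G : Graph', Nonempty
        (F.obj G ≅ GrpCat.of (PresentedGroup
          {r : FreeGroup G.D | ∃ d, r = FreeGroup.of d * FreeGroup.of (G.inv d)})) := by
  exact ⟨Fell, ⟨ellAdj⟩, fun G => ⟨Iso.refl _⟩⟩
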